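/- Let X_1, X_2, … and Y_1, Y_2, … be mutually independent random variables, all with the common distribution P(X = 2^{k²}) = 2^{−k} for k = 1, 2, 3, …, and let S_j = ∑_{k=1}^j X_k and T_{j'} = ∑_{k=1}^{j'} Y_k. Then for every j ≥ 1, the expected number of indices j' ≥ 1 with S_j ≤ T_{j'} ≤ S_{j+1} is infinite. -/

import Mathlib

open MeasureTheory ProbabilityTheory
open scoped ENNReal NNReal

lemma tsum_inv_succ_eq_top : ∑' n : ℕ, ((n : ℝ≥0∞) + 1)⁻¹ = ⊤ := by
  by_contra h
  have hcoe : ∀ n : ℕ, ((n : ℝ≥0∞) + 1)⁻¹ = ((((n : ℝ≥0) + 1)⁻¹ : ℝ≥0) : ℝ≥0∞) := by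
    intro n
    rw [ENNReal.coe_inv (by positivity)]
    push_cast
    rfl
  rw [tsum_congr hcoe] at h
  have hsum : Summable (fun n : ℕ => ((n : ℝ≥0) + 1)⁻¹) :=
    ENNReal.tsum_coe_ne_top_iff_summable.mp h
  have hsumR : Summable (fun n : ℕ => ((n : ℝ) + 1)⁻¹) := by
    have := NNReal.summable_coe.mpr hsum
    simpa using this
  have : Summable (fun n : ℕ => (n : ℝ)⁻¹) := by
    rw [← summable_nat_add_iff 1]
    simpa [add_comm] using hsumR
  exact Real.not_summable_natCast_inv this

lemma tsum_indicator_le_encard (s : Set ℕ) :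
    ∑' n, s.indicator (fun _ => (1 : ℝ≥0∞)) n ≤ s.encard.toENNReal := by
  rw [← tsum_subtype s (fun _ => (1 : ℝ≥0∞))]
  rw [ENNReal.tsum_set_one]


lemma geom_sum_aux (n : ℕ) :
    (∑ k ∈ Finset.Icc 1 n, ((1 : ℝ≥0∞) / 2) ^ k) + (1 / 2) ^ n = 1 := by
  induction n with
  | zero => simp
  | succ n ih =>
    rw [Finset.sum_Icc_succ_top (by omega : 1 ≤ n + 1)]
    have h : ((1 : ℝ≥0∞) / 2) ^ (n + 1) + (1 / 2) ^ (n + 1) = (1 / 2) ^ n := by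
      rw [pow_succ, ← mul_add, ENNReal.add_halves, mul_one]
    rw [add_assoc, h, ih]

lemma one_le_prod_add {ι : Type*} (x : ℝ≥0∞) (s : Finset ι) :
    ∀ (a : ι → ℝ≥0∞), (∀ i ∈ s, a i ≤ 1) → (∀ i ∈ s, 1 ≤ a i + x) →
      1 ≤ (∏ i ∈ s, a i) + s.card * x := by
  classical
  induction s using Finset.cons_induction with
  | empty => intro a _ _; simp
  | cons i s hi ih =>
    intro a h1 h2
    have hp : (∏ k ∈ s, a k) ≤ 1 :=
      Finset.prod_le_one (fun k _ => zero_le) (fun k hk => h1 k (Finset.mem_cons_of_mem hk))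
    have hstep : (∏ k ∈ s, a k) ≤ a i * (∏ k ∈ s, a k) + x := by
      calc (∏ k ∈ s, a k) = 1 * (∏ k ∈ s, a k) := (one_mul _).symm
        _ ≤ (a i + x) * (∏ k ∈ s, a k) := by
            gcongr
            exact h2 i (Finset.mem_cons_self i s)
        _ = a i * (∏ k ∈ s, a k) + x * (∏ k ∈ s, a k) := add_mul _ _ _
        _ ≤ a i * (∏ k ∈ s, a k) + x * 1 := by gcongr
        _ = a i * (∏ k ∈ s, a k) + x := by rw [mul_one]
    calc (1 : ℝ≥0∞) ≤ (∏ k ∈ s, a k) + s.card * x :=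
          ih a (fun k hk => h1 k (Finset.mem_cons_of_mem hk))
            (fun k hk => h2 k (Finset.mem_cons_of_mem hk))
      _ ≤ (a i * (∏ k ∈ s, a k) + x) + s.card * x := by gcongr
      _ = (∏ k ∈ Finset.cons i s hi, a k) + (Finset.cons i s hi).card * x := by
          rw [Finset.prod_cons, Finset.card_cons]
          push_cast
          ring

lemma event_bound {Ω : Type*} [MeasurableSpace Ω]
    (μ : Measure Ω) [IsProbabilityMeasure μ] (X Y : ℕ → Ω → ℝ)
    (hYmeas : ∀ i, Measurable (Y i))
    (hind : iIndepFun
      (Sum.elim (fun i ω => X (i + 1) ω) (fun i ω => Y (i + 1) ω)) μ)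
    (hXdist : ∀ i, 1 ≤ i → ∀ k : ℕ, 1 ≤ k →
      μ {ω | X i ω = (2 : ℝ) ^ (k ^ 2)} = (1 / 2 : ℝ≥0∞) ^ k)
    (hYdist : ∀ i, 1 ≤ i → ∀ k : ℕ, 1 ≤ k →
      μ {ω | Y i ω = (2 : ℝ) ^ (k ^ 2)} = (1 / 2 : ℝ≥0∞) ^ k)
    (j j' : ℕ) (hj : 1 ≤ j) (hjj' : j ≤ j') :
    (1 / 2 : ℝ≥0∞) ^ (j + 1) * (8 * (j' : ℝ≥0∞))⁻¹ ≤
      μ {ω | 1 ≤ j' ∧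
        (∑ k ∈ Finset.Icc 1 j, X k ω) ≤ (∑ k ∈ Finset.Icc 1 j', Y k ω) ∧
        (∑ k ∈ Finset.Icc 1 j', Y k ω) ≤ (∑ k ∈ Finset.Icc 1 (j + 1), X k ω)} := by
  classical
  have hj'1 : 1 ≤ j' := hj.trans hjj'
  set L := Nat.log 2 j' with hL
  set m' : ℕ := L + 2 with hm'
  set m : ℕ := L + 3 with hm
  clear_value m'
  clear_value m
  have hj'lt : j' < 2 ^ (L + 1) := Nat.lt_pow_succ_log_self (by norm_num) j'
  have hj'ge : 2 ^ L ≤ j' := Nat.pow_log_le_self 2 (by omega)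
  set e : ℕ → ℕ := fun i => if i = j then m else 1 with he
  set sets : ℕ ⊕ ℕ → Set Ω := Sum.elim
      (fun i => {ω | X (i + 1) ω = (2 : ℝ) ^ (e i ^ 2)})
      (fun i => {ω | Y (i + 1) ω ∈ Set.Icc (2 : ℝ) ((2 : ℝ) ^ (m' ^ 2))}) with hsets
  set S : Finset (ℕ ⊕ ℕ) :=
      ((Finset.range (j + 1)).image Sum.inl) ∪ ((Finset.range j').image Sum.inr) with hS
  have hmeas : ∀ p ∈ S, MeasurableSet[MeasurableSpace.comap
      (Sum.elim (fun i ω => X (i + 1) ω) (fun i ω => Y (i + 1) ω) p) inferInstance] (sets p) := by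
    rintro (i | i) _
    · exact ⟨{(2 : ℝ) ^ (e i ^ 2)}, measurableSet_singleton _, rfl⟩
    · exact ⟨Set.Icc 2 ((2 : ℝ) ^ (m' ^ 2)), measurableSet_Icc, rfl⟩
  have hprod := hind.meas_biInter (S := S) (s := sets) hmeas
  have hdisj : Disjoint ((Finset.range (j + 1)).image Sum.inl)
      ((Finset.range j').image Sum.inr) := by
    rw [Finset.disjoint_left]
    rintro p hp hq
    obtain ⟨a, -, rfl⟩ := Finset.mem_image.mp hp
    obtain ⟨b, -, hb⟩ := Finset.mem_image.mp hq
    simp at hb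
  have hprodsplit : μ (⋂ p ∈ S, sets p)
      = (∏ i ∈ Finset.range (j + 1), μ (sets (Sum.inl i)))
        * ∏ i ∈ Finset.range j', μ (sets (Sum.inr i)) := by
    rw [hprod, hS, Finset.prod_union hdisj,
      Finset.prod_image (fun a _ b _ h => Sum.inl_injective h),
      Finset.prod_image (fun a _ b _ h => Sum.inr_injective h)]
  have hXfact : (∏ i ∈ Finset.range (j + 1), μ (sets (Sum.inl i)))
      = (1 / 2 : ℝ≥0∞) ^ (j + m) := by
    have hterm : ∀ i ∈ Finset.range (j + 1), μ (sets (Sum.inl i)) = (1 / 2 : ℝ≥0∞) ^ (e i) := by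
      intro i _
      have h1e : 1 ≤ e i := by simp only [he]; split <;> omega
      simpa [hsets] using hXdist (i + 1) (by omega) (e i) h1e
    rw [Finset.prod_congr rfl hterm, Finset.prod_pow_eq_pow_sum]
    congr 1
    rw [Finset.sum_range_succ]
    have hsmall : ∀ i ∈ Finset.range j, e i = 1 := by
      intro i hi
      have := Finset.mem_range.mp hi
      simp only [he]
      rw [if_neg (by omega)]
    rw [Finset.sum_congr rfl hsmall, Finset.sum_const, smul_eq_mul, Finset.card_range]
    have : e j = m := by simp [he]
    rw [this]
    omega
  have hYle : ∀ i ∈ Finset.range j', 1 ≤ μ (sets (Sum.inr i)) + (1 / 2 : ℝ≥0∞) ^ m' := by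
    intro i _
    have hsub : ∀ k ∈ Finset.Icc 1 m',
        {ω | Y (i + 1) ω = (2 : ℝ) ^ (k ^ 2)} ⊆ sets (Sum.inr i) := by
      intro k hk ω hω
      rw [Finset.mem_Icc] at hk
      rw [Set.mem_setOf_eq] at hω
      simp only [hsets, Sum.elim_inr, Set.mem_setOf_eq, Set.mem_Icc]
      refine ⟨?_, ?_⟩
      · rw [hω]
        calc (2 : ℝ) = 2 ^ 1 := (pow_one 2).symm
          _ ≤ 2 ^ (k ^ 2) := by
              apply pow_le_pow_right₀ one_le_two
              nlinarith [hk.1]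
      · rw [hω]
        apply pow_le_pow_right₀ one_le_two
        nlinarith [hk.2]
    have hdisjD : (↑(Finset.Icc 1 m') : Set ℕ).PairwiseDisjoint
        (fun k => {ω | Y (i + 1) ω = (2 : ℝ) ^ (k ^ 2)}) := by
      intro k _ l _ hkl
      simp only [Function.onFun]
      rw [Set.disjoint_left]
      intro ω h1 h2
      rw [Set.mem_setOf_eq] at h1 h2
      apply hkl
      have hre : (2 : ℝ) ^ (k ^ 2) = 2 ^ (l ^ 2) := by rw [← h1, ← h2]
      have hnat : (2 : ℕ) ^ (k ^ 2) = 2 ^ (l ^ 2) := by exact_mod_cast hre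
      have hsq : k ^ 2 = l ^ 2 := Nat.pow_right_injective le_rfl hnat
      nlinarith [hsq]
    calc (1 : ℝ≥0∞) = (∑ k ∈ Finset.Icc 1 m', (1 / 2 : ℝ≥0∞) ^ k) + (1 / 2) ^ m' :=
          (geom_sum_aux m').symm
      _ = (∑ k ∈ Finset.Icc 1 m', μ {ω | Y (i + 1) ω = (2 : ℝ) ^ (k ^ 2)}) + (1 / 2) ^ m' := by
          congr 1
          refine Finset.sum_congr rfl fun k hk => ?_
          exact (hYdist (i + 1) (by omega) k (Finset.mem_Icc.mp hk).1).symm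
      _ = μ (⋃ k ∈ Finset.Icc 1 m', {ω | Y (i + 1) ω = (2 : ℝ) ^ (k ^ 2)}) + (1 / 2) ^ m' := by
          rw [measure_biUnion_finset hdisjD (fun k _ => (hYmeas (i + 1)) (measurableSet_singleton _))]
      _ ≤ μ (sets (Sum.inr i)) + (1 / 2) ^ m' := by
          gcongr
          exact Set.iUnion₂_subset hsub
  have hYprod : (1 / 2 : ℝ≥0∞) ≤ ∏ i ∈ Finset.range j', μ (sets (Sum.inr i)) := by
    have h1 := one_le_prod_add ((1 / 2 : ℝ≥0∞) ^ m') (Finset.range j')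
      (fun i => μ (sets (Sum.inr i))) (fun i _ => prob_le_one) hYle
    have h21 : (2 : ℝ≥0∞) * (1 / 2) = 1 := by
      rw [one_div, ENNReal.mul_inv_cancel] <;> norm_num
    have hcard : ((Finset.range j').card : ℝ≥0∞) * (1 / 2) ^ m' ≤ 1 / 2 := by
      rw [Finset.card_range]
      have hle : (j' : ℝ≥0∞) ≤ 2 ^ (L + 1) := by exact_mod_cast hj'lt.le
      calc (j' : ℝ≥0∞) * (1 / 2) ^ m' ≤ (2 : ℝ≥0∞) ^ (L + 1) * (1 / 2) ^ (L + 2) := by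
            rw [hm']; gcongr
        _ = 1 / 2 := by
            rw [pow_succ ((1 : ℝ≥0∞) / 2) (L + 1), ← mul_assoc, ← mul_pow, h21, one_pow, one_mul]
    have h2 : (1 : ℝ≥0∞) ≤ (∏ i ∈ Finset.range j', μ (sets (Sum.inr i))) + 1 / 2 := by
      refine h1.trans ?_
      gcongr
    have h3 := tsub_le_iff_right.mpr h2
    rwa [one_div, ENNReal.one_sub_inv_two, ← one_div] at h3
  have hsubset : (⋂ p ∈ S, sets p) ⊆ {ω | 1 ≤ j' ∧
      (∑ k ∈ Finset.Icc 1 j, X k ω) ≤ (∑ k ∈ Finset.Icc 1 j', Y k ω) ∧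
      (∑ k ∈ Finset.Icc 1 j', Y k ω) ≤ (∑ k ∈ Finset.Icc 1 (j + 1), X k ω)} := by
    intro ω hω
    simp only [Set.mem_iInter] at hω
    have hXv : ∀ i, i < j + 1 → X (i + 1) ω = (2 : ℝ) ^ (e i ^ 2) := by
      intro i hi
      have hmem : Sum.inl i ∈ S := by
        rw [hS]
        exact Finset.mem_union_left _ (Finset.mem_image_of_mem _ (Finset.mem_range.mpr hi))
      have := hω (Sum.inl i) hmem
      simpa [hsets] using this
    have hYv : ∀ i, i < j' → Y (i + 1) ω ∈ Set.Icc (2 : ℝ) ((2 : ℝ) ^ (m' ^ 2)) := by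
      intro i hi
      have hmem : Sum.inr i ∈ S := by
        rw [hS]
        exact Finset.mem_union_right _ (Finset.mem_image_of_mem _ (Finset.mem_range.mpr hi))
      have := hω (Sum.inr i) hmem
      simpa [hsets] using this
    have hX2 : ∀ i ∈ Finset.Icc 1 j, X i ω = 2 := by
      intro i hi
      rw [Finset.mem_Icc] at hi
      have h := hXv (i - 1) (by omega)
      have hii : i - 1 + 1 = i := by omega
      rw [hii] at h
      have hei : e (i - 1) = 1 := by simp only [he]; rw [if_neg (by omega)]
      rw [h, hei]
      norm_num
    have hXj1 : X (j + 1) ω = (2 : ℝ) ^ (m ^ 2) := by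
      have h := hXv j (by omega)
      have hej : e j = m := by simp [he]
      rwa [hej] at h
    have hY2 : ∀ i ∈ Finset.Icc 1 j', Y i ω ∈ Set.Icc (2 : ℝ) ((2 : ℝ) ^ (m' ^ 2)) := by
      intro i hi
      rw [Finset.mem_Icc] at hi
      have h := hYv (i - 1) (by omega)
      have hii : i - 1 + 1 = i := by omega
      rwa [hii] at h
    have hSj : (∑ k ∈ Finset.Icc 1 j, X k ω) = 2 * j := by
      rw [Finset.sum_congr rfl hX2, Finset.sum_const, Nat.card_Icc, Nat.add_sub_cancel,
        nsmul_eq_mul]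
      ring
    have hSj1 : (∑ k ∈ Finset.Icc 1 (j + 1), X k ω) = 2 * j + 2 ^ (m ^ 2) := by
      rw [Finset.sum_Icc_succ_top (by omega : 1 ≤ j + 1), hSj, hXj1]
    refine ⟨hj'1, ?_, ?_⟩
    · have h2 : (2 : ℝ) * j' ≤ ∑ k ∈ Finset.Icc 1 j', Y k ω := by
        calc (2 : ℝ) * j' = ∑ _k ∈ Finset.Icc 1 j', (2 : ℝ) := by
              rw [Finset.sum_const, Nat.card_Icc, Nat.add_sub_cancel, nsmul_eq_mul]
              ring
          _ ≤ ∑ k ∈ Finset.Icc 1 j', Y k ω := Finset.sum_le_sum (fun i hi => (hY2 i hi).1)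
      have hcast : (j : ℝ) ≤ (j' : ℝ) := by exact_mod_cast hjj'
      rw [hSj]
      linarith
    · have hub : (∑ k ∈ Finset.Icc 1 j', Y k ω) ≤ (j' : ℝ) * 2 ^ (m' ^ 2) := by
        calc (∑ k ∈ Finset.Icc 1 j', Y k ω) ≤ ∑ _k ∈ Finset.Icc 1 j', (2 : ℝ) ^ (m' ^ 2) :=
              Finset.sum_le_sum (fun i hi => (hY2 i hi).2)
          _ = (j' : ℝ) * 2 ^ (m' ^ 2) := by
              rw [Finset.sum_const, Nat.card_Icc, Nat.add_sub_cancel, nsmul_eq_mul]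
      have hnat : j' * 2 ^ (m' ^ 2) ≤ 2 ^ (m ^ 2) := by
        calc j' * 2 ^ (m' ^ 2) ≤ 2 ^ (L + 1) * 2 ^ (m' ^ 2) :=
              Nat.mul_le_mul_right _ hj'lt.le
          _ = 2 ^ (L + 1 + m' ^ 2) := (pow_add 2 _ _).symm
          _ ≤ 2 ^ (m ^ 2) := Nat.pow_le_pow_right (by norm_num) (by rw [hm, hm']; nlinarith)
      have hcast : (j' : ℝ) * 2 ^ (m' ^ 2) ≤ (2 : ℝ) ^ (m ^ 2) := by exact_mod_cast hnat
      have hjpos : (0 : ℝ) ≤ 2 * j := by positivity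
      rw [hSj1]
      linarith
  have h2m : (2 : ℝ≥0∞) ^ m ≤ 8 * (j' : ℝ≥0∞) := by
    have hn : (2 : ℕ) ^ m ≤ 8 * j' := by
      calc (2 : ℕ) ^ m = 8 * 2 ^ L := by rw [hm]; ring
        _ ≤ 8 * j' := Nat.mul_le_mul_left _ hj'ge
    exact_mod_cast hn
  have hinv : (8 * (j' : ℝ≥0∞))⁻¹ ≤ (1 / 2) ^ m := by
    rw [one_div, ← ENNReal.inv_pow]
    exact ENNReal.inv_le_inv.mpr h2m
  calc (1 / 2 : ℝ≥0∞) ^ (j + 1) * (8 * (j' : ℝ≥0∞))⁻¹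
      = (1 / 2) ^ j * (8 * (j' : ℝ≥0∞))⁻¹ * (1 / 2) := by rw [pow_succ]; ring
    _ ≤ (1 / 2) ^ j * (1 / 2) ^ m * (1 / 2) := by gcongr
    _ ≤ (1 / 2) ^ j * (1 / 2) ^ m * ∏ i ∈ Finset.range j', μ (sets (Sum.inr i)) := by gcongr
    _ = μ (⋂ p ∈ S, sets p) := by rw [hprodsplit, hXfact, pow_add, mul_assoc]
    _ ≤ _ := measure_mono hsubset


/-- unfairness of noisy scheduling.  Let `X 1, X 2, …` and
`Y 1, Y 2, …` be mutually independent random variables, all with the common distribution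
`P(X = 2^(k²)) = 2⁻ᵏ` for `k = 1, 2, …`, and let `S j = ∑_{k=1}^j X k` and
`T j' = ∑_{k=1}^{j'} Y k`.  Then for every `j ≥ 1` the expected number of indices
`j' ≥ 1` with `S j ≤ T j' ≤ S (j+1)` is infinite. -/
theorem unfairness {Ω : Type*} [MeasurableSpace Ω]
    (μ : Measure Ω) [IsProbabilityMeasure μ] (X Y : ℕ → Ω → ℝ)
    (hXmeas : ∀ i, Measurable (X i)) (hYmeas : ∀ i, Measurable (Y i))
    (hind : iIndepFun
      (Sum.elim (fun i ω => X (i + 1) ω) (fun i ω => Y (i + 1) ω)) μ)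
    (hXdist : ∀ i, 1 ≤ i → ∀ k : ℕ, 1 ≤ k →
      μ {ω | X i ω = (2 : ℝ) ^ (k ^ 2)} = (1 / 2 : ℝ≥0∞) ^ k)
    (hYdist : ∀ i, 1 ≤ i → ∀ k : ℕ, 1 ≤ k →
      μ {ω | Y i ω = (2 : ℝ) ^ (k ^ 2)} = (1 / 2 : ℝ≥0∞) ^ k)
    (j : ℕ) (hj : 1 ≤ j) :
    ∫⁻ ω, ({j' : ℕ | 1 ≤ j' ∧
        (∑ k ∈ Finset.Icc 1 j, X k ω) ≤ (∑ k ∈ Finset.Icc 1 j', Y k ω) ∧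
        (∑ k ∈ Finset.Icc 1 j', Y k ω) ≤ (∑ k ∈ Finset.Icc 1 (j + 1), X k ω)} :
        Set ℕ).encard.toENNReal ∂μ = ⊤ := by
  classical
  set P : ℕ → Set Ω := fun j' => {ω | 1 ≤ j' ∧
      (∑ k ∈ Finset.Icc 1 j, X k ω) ≤ (∑ k ∈ Finset.Icc 1 j', Y k ω) ∧
      (∑ k ∈ Finset.Icc 1 j', Y k ω) ≤ (∑ k ∈ Finset.Icc 1 (j + 1), X k ω)} with hP
  have hPmeas : ∀ j', MeasurableSet (P j') := by
    intro j'
    have h1 : MeasurableSet {ω : Ω |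
        (∑ k ∈ Finset.Icc 1 j, X k ω) ≤ (∑ k ∈ Finset.Icc 1 j', Y k ω)} :=
      measurableSet_le (Finset.measurable_sum _ (fun i _ => hXmeas i))
        (Finset.measurable_sum _ (fun i _ => hYmeas i))
    have h2 : MeasurableSet {ω : Ω |
        (∑ k ∈ Finset.Icc 1 j', Y k ω) ≤ (∑ k ∈ Finset.Icc 1 (j + 1), X k ω)} :=
      measurableSet_le (Finset.measurable_sum _ (fun i _ => hYmeas i))
        (Finset.measurable_sum _ (fun i _ => hXmeas i))
    by_cases hj' : 1 ≤ j'
    · have hPe : P j' = {ω : Ω |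
          (∑ k ∈ Finset.Icc 1 j, X k ω) ≤ (∑ k ∈ Finset.Icc 1 j', Y k ω)} ∩ {ω : Ω |
          (∑ k ∈ Finset.Icc 1 j', Y k ω) ≤ (∑ k ∈ Finset.Icc 1 (j + 1), X k ω)} := by
        ext ω
        simp [hP, hj', Set.mem_setOf_eq]
      rw [hPe]; exact h1.inter h2
    · have hPe : P j' = ∅ := by
        ext ω
        simp [hP, hj']
      rw [hPe]; exact MeasurableSet.empty
  have hkey : ∑' j', μ (P j') ≤ ∫⁻ ω, ({j' : ℕ | 1 ≤ j' ∧
      (∑ k ∈ Finset.Icc 1 j, X k ω) ≤ (∑ k ∈ Finset.Icc 1 j', Y k ω) ∧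
      (∑ k ∈ Finset.Icc 1 j', Y k ω) ≤ (∑ k ∈ Finset.Icc 1 (j + 1), X k ω)} :
      Set ℕ).encard.toENNReal ∂μ := by
    calc ∑' j', μ (P j')
        = ∑' j', ∫⁻ ω, (P j').indicator (fun _ => (1 : ℝ≥0∞)) ω ∂μ := by
          refine tsum_congr fun j' => ?_
          exact (lintegral_indicator_one (hPmeas j')).symm
      _ = ∫⁻ ω, ∑' j', (P j').indicator (fun _ => (1 : ℝ≥0∞)) ω ∂μ :=
          (lintegral_tsum (fun j' => (measurable_const.indicator (hPmeas j')).aemeasurable)).symm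
      _ ≤ _ := by
          refine lintegral_mono fun ω => ?_
          refine le_trans (le_of_eq (tsum_congr fun j' => ?_))
            (tsum_indicator_le_encard _)
          by_cases hωP : ω ∈ P j'
          · rw [Set.indicator_of_mem hωP, Set.indicator_of_mem]
            exact hωP
          · rw [Set.indicator_of_notMem hωP, Set.indicator_of_notMem]
            exact hωP
  have hlow : ∀ n : ℕ, (1 / 2 : ℝ≥0∞) ^ (j + 1) * (8 * (((n + j : ℕ)) : ℝ≥0∞))⁻¹
      ≤ μ (P (n + j)) := fun n =>
    event_bound μ X Y hYmeas hind hXdist hYdist j (n + j) hj (by omega)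
  set c : ℝ≥0∞ := (1 / 2) ^ (j + 1) * (8⁻¹ * ((j : ℝ≥0∞) + 1)⁻¹) with hc
  have hc0 : c ≠ 0 := by
    rw [hc]
    refine mul_ne_zero (pow_ne_zero _ (by norm_num)) (mul_ne_zero ?_ ?_)
    · simp
    · refine ENNReal.inv_ne_zero.mpr ?_
      exact ENNReal.add_ne_top.mpr ⟨ENNReal.natCast_ne_top j, ENNReal.one_ne_top⟩
  have hterm : ∀ n : ℕ, c * ((n : ℝ≥0∞) + 1)⁻¹ ≤ μ (P (n + j)) := by
    intro n
    refine le_trans ?_ (hlow n)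
    have h8 : (8 * (((n + j : ℕ)) : ℝ≥0∞))⁻¹ = 8⁻¹ * ((((n + j : ℕ)) : ℝ≥0∞))⁻¹ :=
      ENNReal.mul_inv (Or.inl (by norm_num)) (Or.inl (by norm_num))
    have hjne : ((j : ℝ≥0∞) + 1) ≠ ⊤ :=
      ENNReal.add_ne_top.mpr ⟨ENNReal.natCast_ne_top j, ENNReal.one_ne_top⟩
    have hnne : ((n : ℝ≥0∞) + 1) ≠ 0 := by simp
    rw [hc]
    calc (1 / 2 : ℝ≥0∞) ^ (j + 1) * (8⁻¹ * ((j : ℝ≥0∞) + 1)⁻¹) * ((n : ℝ≥0∞) + 1)⁻¹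
        = (1 / 2) ^ (j + 1) * (8⁻¹ * (((j : ℝ≥0∞) + 1)⁻¹ * ((n : ℝ≥0∞) + 1)⁻¹)) := by
          ring
      _ ≤ (1 / 2) ^ (j + 1) * (8⁻¹ * ((((n + j : ℕ)) : ℝ≥0∞))⁻¹) := by
          gcongr
          rw [← ENNReal.mul_inv (Or.inr (ENNReal.add_ne_top.mpr
            ⟨ENNReal.natCast_ne_top n, ENNReal.one_ne_top⟩)) (Or.inr hnne)]
          apply ENNReal.inv_le_inv.mpr
          have hn : (n + j : ℕ) ≤ (j + 1) * (n + 1) := by nlinarith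
          calc (((n + j : ℕ)) : ℝ≥0∞) ≤ (((j + 1) * (n + 1) : ℕ) : ℝ≥0∞) := by
                exact_mod_cast hn
            _ = ((j : ℝ≥0∞) + 1) * ((n : ℝ≥0∞) + 1) := by push_cast; ring
      _ = (1 / 2) ^ (j + 1) * (8 * (((n + j : ℕ)) : ℝ≥0∞))⁻¹ := by rw [h8]
  have htop : (⊤ : ℝ≥0∞) ≤ ∑' j', μ (P j') := by
    have hcomp : ∑' n : ℕ, μ (P (n + j)) ≤ ∑' j', μ (P j') :=
      ENNReal.tsum_comp_le_tsum_of_injective (add_left_injective j) (fun j' => μ (P j'))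
    calc (⊤ : ℝ≥0∞) = c * ∑' n : ℕ, ((n : ℝ≥0∞) + 1)⁻¹ := by
          rw [tsum_inv_succ_eq_top, ENNReal.mul_top hc0]
      _ = ∑' n : ℕ, c * ((n : ℝ≥0∞) + 1)⁻¹ := ENNReal.tsum_mul_left.symm
      _ ≤ ∑' n : ℕ, μ (P (n + j)) := ENNReal.tsum_le_tsum hterm
      _ ≤ ∑' j', μ (P j') := hcomp
  exact top_le_iff.mp (le_trans htop hkey)
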